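/- Let (X_n, A_n, B_n) be a controlled process on a finite state space under strategies (π, ψ) with ψ stationary, and suppose h* : E → (0, ∞), ρ*, ε, θ with θ > 0 satisfy h*(X_n) ≤ e^{θ(ε−ρ*)} E[e^{θ c(X_n,A_n,B_n)} h*(X_{n+1}) | history up to n] almost surely for all n. Then for all n ≥ 1 and initial state i: e^{nθ(ε−ρ*)} E_i[e^{θ Σ_{k=0}^{n−1} c(X_k,A_k,B_k)} h*(X_n)] ≥ min_j h*(j), and consequently liminf_n (1/(θn)) ln E_i[e^{θ Σ_{k=0}^{n−1} c(X_k,A_k,B_k)}] ≥ ρ* − ε. -/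

import Mathlib

open MeasureTheory Filter

/-- for a controlled process on a finite state space satisfying the
one-step conditional super-martingale inequality
`h*(X_n) ≤ e^{θ(ε−ρ*)} E[e^{θ c(X_n,A_n,B_n)} h*(X_{n+1}) | F_n]` with `h* > 0`, one has
`e^{nθ(ε−ρ*)} E_i[e^{θ Σ_{k<n} c} h*(X_n)] ≥ min_j h*(j)` for all `n ≥ 1`, and hence
`liminf_n (1/(θn)) ln E[e^{θ Σ_{k<n} c}] ≥ ρ* − ε`. -/
theorem stmt_15 {E α β Ω : Type*} [Fintype E] [Nonempty E]
    {m0 : MeasurableSpace Ω} (μ : Measure Ω) [IsProbabilityMeasure μ]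
    (F : ℕ → MeasurableSpace Ω) (hFle : ∀ n, F n ≤ m0) (hFmono : ∀ n, F n ≤ F (n + 1))
    (X : ℕ → Ω → E) (Aa : ℕ → Ω → α) (Bb : ℕ → Ω → β)
    (c : E → α → β → ℝ) (hcb : ∃ M : ℝ, ∀ i a b, |c i a b| ≤ M)
    (hstar : E → ℝ) (hpos : ∀ i, 0 < hstar i)
    (θ ρstar ε : ℝ) (hθ : 0 < θ)
    (hint : ∀ n, Integrable (fun ω =>
      Real.exp (θ * ∑ k ∈ Finset.range n, c (X k ω) (Aa k ω) (Bb k ω)) * hstar (X n ω)) μ)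
    (hint' : ∀ n, Integrable (fun ω =>
      Real.exp (θ * ∑ k ∈ Finset.range n, c (X k ω) (Aa k ω) (Bb k ω))) μ)
    (hadapt : ∀ n, Measurable[F n] (fun ω =>
      Real.exp (θ * ∑ k ∈ Finset.range n, c (X k ω) (Aa k ω) (Bb k ω)) * hstar (X n ω)))
    (hstep : ∀ n, ∀ᵐ ω ∂μ, hstar (X n ω) ≤ Real.exp (θ * (ε - ρstar)) *
      (μ[(fun ω' => Real.exp (θ * c (X n ω') (Aa n ω') (Bb n ω')) *
          hstar (X (n + 1) ω')) | F n]) ω) :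
    (∀ n : ℕ, 1 ≤ n →
      (Finset.univ.inf' Finset.univ_nonempty hstar) ≤
        Real.exp ((n : ℝ) * θ * (ε - ρstar)) *
          ∫ ω, Real.exp (θ * ∑ k ∈ Finset.range n, c (X k ω) (Aa k ω) (Bb k ω)) *
            hstar (X n ω) ∂μ) ∧
    ρstar - ε ≤ atTop.liminf (fun n : ℕ =>
      (1 / (θ * n)) * Real.log
        (∫ ω, Real.exp (θ * ∑ k ∈ Finset.range n, c (X k ω) (Aa k ω) (Bb k ω)) ∂μ)) := by
  classical
  set m := Finset.univ.inf' Finset.univ_nonempty hstar with hm_def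
  have hm_le : ∀ j : E, m ≤ hstar j := fun j => Finset.inf'_le _ (Finset.mem_univ j)
  have hm_pos : 0 < m := by
    obtain ⟨j, -, hj⟩ := Finset.exists_mem_eq_inf' Finset.univ_nonempty hstar
    rw [hm_def, hj]; exact hpos j
  set V := Finset.univ.sup' Finset.univ_nonempty hstar with hV_def
  have hV_le : ∀ j : E, hstar j ≤ V := fun j => Finset.le_sup' _ (Finset.mem_univ j)
  have hV_pos : 0 < V := lt_of_lt_of_le (hpos (Classical.arbitrary E)) (hV_le _)
  set δ := θ * (ε - ρstar) with hδ
  set φ : ℕ → Ω → ℝ := fun n ω =>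
    Real.exp (θ * ∑ k ∈ Finset.range n, c (X k ω) (Aa k ω) (Bb k ω)) * hstar (X n ω) with hφ
  have hφpos : ∀ n ω, 0 < φ n ω := fun n ω => mul_pos (Real.exp_pos _) (hpos _)
  -- key recursion
  have key : ∀ n : ℕ, Real.exp (-δ) * ∫ ω, φ n ω ∂μ ≤ ∫ ω, φ (n + 1) ω ∂μ := by
    intro n
    set f : Ω → ℝ := fun ω =>
      Real.exp (θ * c (X n ω) (Aa n ω) (Bb n ω)) * hstar (X (n + 1) ω) with hf_def
    have hfpos : ∀ ω, 0 < f ω := fun ω => mul_pos (Real.exp_pos _) (hpos _)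
    have hstepn : ∀ᵐ ω ∂μ, hstar (X n ω) ≤ Real.exp δ * (μ[f | F n]) ω := hstep n
    by_cases hf : Integrable f μ
    · set Y : Ω → ℝ := μ[f | F n] with hY
      set W : Ω → ℝ := fun ω => φ n ω / (Real.exp δ * Y ω) with hW
      have hYmeas : Measurable[F n] Y := stronglyMeasurable_condExp.measurable
      have hWmeas : Measurable[F n] W :=
        (hadapt n).div (measurable_const.mul hYmeas)
      have hae1 : ∀ᵐ ω ∂μ, W ω * f ω ≤ φ (n + 1) ω := by
        filter_upwards [hstepn] with ω hω
        have hh : 0 < hstar (X n ω) := hpos _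
        have hY0 : 0 < Real.exp δ * Y ω := lt_of_lt_of_le hh hω
        have h1 : W ω ≤ φ n ω / hstar (X n ω) :=
          div_le_div_of_nonneg_left (hφpos n ω).le hh hω
        have h2 : φ n ω / hstar (X n ω) * f ω = φ (n + 1) ω := by
          have hne : hstar (X n ω) ≠ 0 := hh.ne'
          simp only [hφ, hf_def]
          rw [Finset.sum_range_succ, mul_add, Real.exp_add]
          field_simp
        calc W ω * f ω ≤ φ n ω / hstar (X n ω) * f ω :=
              mul_le_mul_of_nonneg_right h1 (hfpos ω).le
          _ = φ (n + 1) ω := h2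
      have hae0 : ∀ᵐ ω ∂μ, 0 ≤ W ω * f ω := by
        filter_upwards [hstepn] with ω hω
        have hY0 : 0 < Real.exp δ * Y ω := lt_of_lt_of_le (hpos _) hω
        exact mul_nonneg (div_nonneg (hφpos n ω).le hY0.le) (hfpos ω).le
      have hWf_int : Integrable (fun ω => W ω * f ω) μ := by
        refine Integrable.mono (hint (n + 1)) ?_ ?_
        · exact ((hWmeas.mono (hFle n) le_rfl).aestronglyMeasurable.mul hf.1)
        · filter_upwards [hae1, hae0] with ω h1 h0
          rw [Real.norm_eq_abs, Real.norm_eq_abs, abs_of_nonneg h0]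
          exact h1.trans (le_abs_self _)
      have hpull : μ[fun ω => W ω * f ω | F n] =ᵐ[μ] fun ω => W ω * Y ω :=
        condExp_mul_of_stronglyMeasurable_left hWmeas.stronglyMeasurable hWf_int hf
      have hWY : (fun ω => W ω * Y ω) =ᵐ[μ] fun ω => Real.exp (-δ) * φ n ω := by
        filter_upwards [hstepn] with ω hω
        have hY0 : 0 < Real.exp δ * Y ω := lt_of_lt_of_le (hpos _) hω
        have hYne : Y ω ≠ 0 := by
          intro h
          rw [h, mul_zero] at hY0
          exact lt_irrefl 0 hY0
        show φ n ω / (Real.exp δ * Y ω) * Y ω = Real.exp (-δ) * φ n ω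
        rw [Real.exp_neg]
        field_simp
      calc Real.exp (-δ) * ∫ ω, φ n ω ∂μ
          = ∫ ω, Real.exp (-δ) * φ n ω ∂μ := (integral_const_mul _ _).symm
        _ = ∫ ω, W ω * Y ω ∂μ := (integral_congr_ae hWY).symm
        _ = ∫ ω, (μ[fun ω => W ω * f ω | F n]) ω ∂μ := (integral_congr_ae hpull).symm
        _ = ∫ ω, W ω * f ω ∂μ := integral_condExp (hFle n)
        _ ≤ ∫ ω, φ (n + 1) ω ∂μ := integral_mono_ae hWf_int (hint (n + 1)) hae1
    · exfalso
      have h0 : μ[f | F n] = 0 := condExp_of_not_integrable hf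
      rw [h0] at hstepn
      simp only [Pi.zero_apply, mul_zero] at hstepn
      obtain ⟨ω, hω⟩ := hstepn.exists
      exact absurd hω (not_le.mpr (hpos _))
  -- lower bound by induction
  have lower : ∀ n : ℕ, Real.exp (-((n : ℝ) * δ)) * m ≤ ∫ ω, φ n ω ∂μ := by
    intro n
    induction n with
    | zero =>
        simp only [Nat.cast_zero, zero_mul, neg_zero, Real.exp_zero, one_mul]
        have hle : ∀ ω, m ≤ φ 0 ω := by
          intro ω
          have : φ 0 ω = hstar (X 0 ω) := by simp [hφ]
          rw [this]
          exact hm_le _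
        calc m = ∫ _ω, m ∂μ := by simp
          _ ≤ ∫ ω, φ 0 ω ∂μ := integral_mono (integrable_const m) (hint 0)
              (fun ω => hle ω)
    | succ n ih =>
        have e : -(((n + 1 : ℕ) : ℝ) * δ) = -δ + -((n : ℝ) * δ) := by
          push_cast
          ring
        rw [e, Real.exp_add, mul_assoc]
        calc Real.exp (-δ) * (Real.exp (-((n : ℝ) * δ)) * m)
            ≤ Real.exp (-δ) * ∫ ω, φ n ω ∂μ :=
              mul_le_mul_of_nonneg_left ih (Real.exp_pos _).le
          _ ≤ ∫ ω, φ (n + 1) ω ∂μ := key n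
  -- Part 1
  have part1 : ∀ n : ℕ, 1 ≤ n → m ≤ Real.exp ((n : ℝ) * θ * (ε - ρstar)) * ∫ ω, φ n ω ∂μ := by
    intro n _
    have h := lower n
    have h2 : Real.exp ((n : ℝ) * δ) * (Real.exp (-((n : ℝ) * δ)) * m)
        ≤ Real.exp ((n : ℝ) * δ) * ∫ ω, φ n ω ∂μ :=
      mul_le_mul_of_nonneg_left h (Real.exp_pos _).le
    rw [← mul_assoc, ← Real.exp_add] at h2
    simp only [add_neg_cancel, Real.exp_zero, one_mul] at h2
    rw [hδ, ← mul_assoc] at h2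
    exact h2
  -- lower bound for the integral of the exponential alone
  have hGbd : ∀ n : ℕ, Real.exp (-((n : ℝ) * δ)) * m / V
      ≤ ∫ ω, Real.exp (θ * ∑ k ∈ Finset.range n, c (X k ω) (Aa k ω) (Bb k ω)) ∂μ := by
    intro n
    have hstep1 : (∫ ω, φ n ω ∂μ) / V
        ≤ ∫ ω, Real.exp (θ * ∑ k ∈ Finset.range n, c (X k ω) (Aa k ω) (Bb k ω)) ∂μ := by
      rw [div_eq_mul_inv, ← integral_mul_const]
      refine integral_mono ((hint n).mul_const _) (hint' n) ?_
      intro ω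
      show φ n ω * V⁻¹ ≤ Real.exp (θ * ∑ k ∈ Finset.range n, c (X k ω) (Aa k ω) (Bb k ω))
      rw [← div_eq_mul_inv, div_le_iff₀ hV_pos]
      exact mul_le_mul_of_nonneg_left (hV_le _) (Real.exp_pos _).le
    refine le_trans ?_ hstep1
    exact div_le_div_of_nonneg_right (lower n) hV_pos.le
  -- Part 2
  refine ⟨part1, ?_⟩
  set a : ℕ → ℝ := fun n => (1 / (θ * n)) * Real.log
      (∫ ω, Real.exp (θ * ∑ k ∈ Finset.range n, c (X k ω) (Aa k ω) (Bb k ω)) ∂μ) with ha_def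
  set b : ℕ → ℝ := fun n => (ρstar - ε) + Real.log (m / V) / (θ * n) with hb_def
  have hev : ∀ᶠ n in atTop, b n ≤ a n := by
    filter_upwards [eventually_ge_atTop 1] with n hn
    have hn0 : (0 : ℝ) < (n : ℝ) := by exact_mod_cast hn
    have hθn : 0 < θ * (n : ℝ) := mul_pos hθ hn0
    have hL : Real.log (Real.exp (-((n : ℝ) * δ)) * m / V)
        = -((n : ℝ) * δ) + Real.log (m / V) := by
      rw [mul_div_assoc, Real.log_mul (Real.exp_ne_zero _) (div_pos hm_pos hV_pos).ne',
        Real.log_exp]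
    have hlog : -((n : ℝ) * δ) + Real.log (m / V) ≤ Real.log
        (∫ ω, Real.exp (θ * ∑ k ∈ Finset.range n, c (X k ω) (Aa k ω) (Bb k ω)) ∂μ) := by
      rw [← hL]
      exact Real.log_le_log (div_pos (mul_pos (Real.exp_pos _) hm_pos) hV_pos) (hGbd n)
    have key2 : b n = (1 / (θ * (n : ℝ))) * (-((n : ℝ) * δ) + Real.log (m / V)) := by
      show (ρstar - ε) + Real.log (m / V) / (θ * (n : ℝ))
        = (1 / (θ * (n : ℝ))) * (-((n : ℝ) * δ) + Real.log (m / V))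
      rw [hδ]
      field_simp
      ring
    calc b n = (1 / (θ * (n : ℝ))) * (-((n : ℝ) * δ) + Real.log (m / V)) := key2
      _ ≤ (1 / (θ * (n : ℝ))) * Real.log
          (∫ ω, Real.exp (θ * ∑ k ∈ Finset.range n, c (X k ω) (Aa k ω) (Bb k ω)) ∂μ) :=
        mul_le_mul_of_nonneg_left hlog (by positivity)
      _ = a n := rfl
  have htend : Tendsto b atTop (nhds (ρstar - ε)) := by
    have h1 : Tendsto (fun n : ℕ => Real.log (m / V) / (θ * n)) atTop (nhds 0) := by
      have h2 : (fun n : ℕ => Real.log (m / V) / (θ * n))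
          = fun n : ℕ => (Real.log (m / V) / θ) * (1 / n) := by
        funext n
        rw [mul_one_div, div_div]
      rw [h2]
      simpa using tendsto_one_div_atTop_nhds_zero_nat.const_mul (Real.log (m / V) / θ)
    rw [hb_def]
    simpa using (tendsto_const_nhds (x := ρstar - ε) (f := (atTop : Filter ℕ))).add h1
  have hliminfb : atTop.liminf b = ρstar - ε := htend.liminf_eq
  rw [← hliminfb]
  obtain ⟨M, hM⟩ := hcb
  have haM : ∀ᶠ n in atTop, a n ≤ M := by
    filter_upwards [eventually_ge_atTop 1] with n hn
    have hn0 : (0 : ℝ) < (n : ℝ) := by exact_mod_cast hn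
    have hθn : 0 < θ * (n : ℝ) := mul_pos hθ hn0
    have hGposn : 0 < ∫ ω, Real.exp (θ * ∑ k ∈ Finset.range n, c (X k ω) (Aa k ω) (Bb k ω)) ∂μ :=
      lt_of_lt_of_le (div_pos (mul_pos (Real.exp_pos _) hm_pos) hV_pos) (hGbd n)
    have hIle : (∫ ω, Real.exp (θ * ∑ k ∈ Finset.range n, c (X k ω) (Aa k ω) (Bb k ω)) ∂μ)
        ≤ Real.exp (θ * ((n : ℝ) * M)) := by
      calc (∫ ω, Real.exp (θ * ∑ k ∈ Finset.range n, c (X k ω) (Aa k ω) (Bb k ω)) ∂μ)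
          ≤ ∫ _ω, Real.exp (θ * ((n : ℝ) * M)) ∂μ := by
            refine integral_mono (hint' n) (integrable_const _) ?_
            intro ω
            apply Real.exp_le_exp.mpr
            refine mul_le_mul_of_nonneg_left ?_ hθ.le
            calc ∑ k ∈ Finset.range n, c (X k ω) (Aa k ω) (Bb k ω)
                ≤ ∑ _k ∈ Finset.range n, M :=
                  Finset.sum_le_sum (fun k _ => (abs_le.mp (hM _ _ _)).2)
              _ = (n : ℝ) * M := by
                  rw [Finset.sum_const, Finset.card_range, nsmul_eq_mul]
        _ = Real.exp (θ * ((n : ℝ) * M)) := by simp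
    have hlogle : Real.log
        (∫ ω, Real.exp (θ * ∑ k ∈ Finset.range n, c (X k ω) (Aa k ω) (Bb k ω)) ∂μ)
        ≤ θ * ((n : ℝ) * M) := by
      calc Real.log (∫ ω, Real.exp (θ * ∑ k ∈ Finset.range n, c (X k ω) (Aa k ω) (Bb k ω)) ∂μ)
          ≤ Real.log (Real.exp (θ * ((n : ℝ) * M))) := Real.log_le_log hGposn hIle
        _ = θ * ((n : ℝ) * M) := Real.log_exp _
    calc a n ≤ (1 / (θ * (n : ℝ))) * (θ * ((n : ℝ) * M)) :=
          mul_le_mul_of_nonneg_left hlogle (by positivity)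
      _ = M := by field_simp
  exact liminf_le_liminf hev htend.isBoundedUnder_ge
    (IsBoundedUnder.isCoboundedUnder_ge ⟨M, by simpa [Filter.eventually_map] using haM⟩)
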